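/- arXiv:math/9804112 — 2 statements merged into one kernel-verified Lean document; each statement's English description precedes it below -/
import Mathlib

section
/- Let E be a closed subset of the unit sphere S of C^n satisfying Σ_s for some s < n: σ(B(x,R) ∩ E_ε) ≤ C R^s ε^{n-s} for all x ∈ S, R > 0, 0 < ε < R. Then (E,d) ∈ Υ_s, i.e. the maximal number N of R-separated points of E in a ball B(x,kR) satisfies N ≤ C' k^s for 0 < R ≤ kR ≤ 1. -/
open MeasureTheory
open scoped ENNReal

noncomputable def dNI {n : ℕ} (x y : EuclideanSpace ℂ (Fin n)) : ℝ :=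
  ‖1 - (inner ℂ y x : ℂ)‖

/-- Nonisotropic distance from `z` to the set `E`. -/
noncomputable def dE {n : ℕ} (E : Set (EuclideanSpace ℂ (Fin n)))
    (z : EuclideanSpace ℂ (Fin n)) : ℝ :=
  sInf (dNI z '' E)

/-- The `d`-ball of center `x` and radius `r` inside the unit sphere. -/
def Sball {n : ℕ} (x : EuclideanSpace ℂ (Fin n)) (r : ℝ) :
    Set (EuclideanSpace ℂ (Fin n)) :=
  {z | ‖z‖ = 1 ∧ dNI x z < r}

lemma dNI_nonneg' {n : ℕ} (x y : EuclideanSpace ℂ (Fin n)) : 0 ≤ dNI x y :=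
  norm_nonneg _

lemma dNI_symm' {n : ℕ} (x y : EuclideanSpace ℂ (Fin n)) : dNI x y = dNI y x := by
  unfold dNI
  rw [← Complex.norm_conj (1 - (inner ℂ y x : ℂ)), map_sub, map_one, inner_conj_symm]

lemma dNI_quasi' {n : ℕ} {x y z : EuclideanSpace ℂ (Fin n)}
    (hx : ‖x‖ = 1) (hy : ‖y‖ = 1) (hz : ‖z‖ = 1) :
    dNI x z ≤ 2 * (dNI x y + dNI y z) := by
  set a : ℂ := (inner ℂ y x : ℂ) with ha
  set b : ℂ := (inner ℂ z y : ℂ) with hb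
  set x' := x - a • y with hx'
  set z' := z - ((starRingEnd ℂ) b) • y with hz'
  have hyy : (inner ℂ y y : ℂ) = 1 := by
    rw [inner_self_eq_norm_sq_to_K, hy]; norm_num
  have hxx : (inner ℂ x x : ℂ) = 1 := by
    rw [inner_self_eq_norm_sq_to_K, hx]; norm_num
  have hzz : (inner ℂ z z : ℂ) = 1 := by
    rw [inner_self_eq_norm_sq_to_K, hz]; norm_num
  have hxy : (inner ℂ x y : ℂ) = (starRingEnd ℂ) a := by rw [ha, inner_conj_symm]
  have hyz : (inner ℂ y z : ℂ) = (starRingEnd ℂ) b := by rw [hb, inner_conj_symm]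
  have h1 : (inner ℂ z x : ℂ) = b * a + (inner ℂ z' x' : ℂ) := by
    simp only [hz', hx', inner_sub_left, inner_sub_right, inner_smul_left,
      inner_smul_right, hyy, hxy, hyz, RingHom.map_mul, Complex.conj_conj]
    ring
  have hxnorm : (‖x'‖ : ℝ) ^ 2 = 1 - ‖a‖ ^ 2 := by
    have h2 : (inner ℂ x' x' : ℂ) = 1 - (‖a‖ : ℂ) ^ 2 := by
      simp only [hx', inner_sub_left, inner_sub_right, inner_smul_left,
        inner_smul_right, hyy, hxx, hxy, ← ha]
      rw [show ((‖a‖ : ℂ)) ^ 2 = a * (starRingEnd ℂ) a by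
        rw [Complex.mul_conj, Complex.normSq_eq_norm_sq]; push_cast; ring]
      ring
    have h3 := inner_self_eq_norm_sq_to_K (𝕜 := ℂ) x'
    rw [h2] at h3
    have h4 : ((‖x'‖ ^ 2 : ℝ) : ℂ) = ((1 - ‖a‖ ^ 2 : ℝ) : ℂ) := by
      push_cast; exact h3.symm
    exact Complex.ofReal_inj.mp h4
  have hznorm : (‖z'‖ : ℝ) ^ 2 = 1 - ‖b‖ ^ 2 := by
    have h2 : (inner ℂ z' z' : ℂ) = 1 - (‖b‖ : ℂ) ^ 2 := by
      simp only [hz', inner_sub_left, inner_sub_right, inner_smul_left,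
        inner_smul_right, hyy, hzz, hyz, ← hb]
      rw [show ((‖b‖ : ℂ)) ^ 2 = b * (starRingEnd ℂ) b by
        rw [Complex.mul_conj, Complex.normSq_eq_norm_sq]; push_cast; ring]
      ring
    have h3 := inner_self_eq_norm_sq_to_K (𝕜 := ℂ) z'
    rw [h2] at h3
    have h4 : ((‖z'‖ ^ 2 : ℝ) : ℂ) = ((1 - ‖b‖ ^ 2 : ℝ) : ℂ) := by
      push_cast; exact h3.symm
    exact Complex.ofReal_inj.mp h4
  have hCS : ‖(inner ℂ z' x' : ℂ)‖ ≤ ‖z'‖ * ‖x'‖ := by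
    simpa using norm_inner_le_norm (𝕜 := ℂ) z' x'
  have haabs : ‖a‖ ≤ 1 := by
    have := norm_inner_le_norm (𝕜 := ℂ) y x
    simpa [hx, hy, ha] using this
  have hbabs : ‖b‖ ≤ 1 := by
    have := norm_inner_le_norm (𝕜 := ℂ) z y
    simpa [hz, hy, hb] using this
  set u := ‖1 - a‖ with hu
  set v := ‖1 - b‖ with hv
  have hu0 : 0 ≤ u := norm_nonneg _
  have hv0 : 0 ≤ v := norm_nonneg _
  have hua : 1 - ‖a‖ ≤ u := by
    have := norm_sub_norm_le (1 : ℂ) a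
    simpa using this
  have hvb : 1 - ‖b‖ ≤ v := by
    have := norm_sub_norm_le (1 : ℂ) b
    simpa using this
  have hx2 : ‖x'‖ ^ 2 ≤ 2 * u := by
    rw [hxnorm]
    nlinarith [norm_nonneg a]
  have hz2 : ‖z'‖ ^ 2 ≤ 2 * v := by
    rw [hznorm]
    nlinarith [norm_nonneg b]
  have hcross : ‖z'‖ * ‖x'‖ ≤ u + v := by
    nlinarith [sq_nonneg (‖z'‖ - ‖x'‖), norm_nonneg x', norm_nonneg z']
  have hba : ‖1 - b * a‖ ≤ u + v := by
    have e : (1 : ℂ) - b * a = (1 - b) + b * (1 - a) := by ring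
    rw [e]
    calc ‖(1 - b) + b * (1 - a)‖
        ≤ ‖1 - b‖ + ‖b * (1 - a)‖ := norm_add_le _ _
      _ = v + ‖b‖ * u := by rw [norm_mul]
      _ ≤ u + v := by
          have h := mul_le_of_le_one_left hu0 hbabs
          linarith
  have : dNI x z = ‖1 - (b * a + (inner ℂ z' x' : ℂ))‖ := by
    rw [dNI, h1]
  have e2 : (1 : ℂ) - (b * a + (inner ℂ z' x' : ℂ)) = (1 - b * a) + (-(inner ℂ z' x' : ℂ)) := by
    ring
  calc dNI x z = ‖(1 - b * a) + (-(inner ℂ z' x' : ℂ))‖ := by rw [this, e2]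
    _ ≤ ‖1 - b * a‖ + ‖-(inner ℂ z' x' : ℂ)‖ := norm_add_le _ _
    _ = ‖1 - b * a‖ + ‖(inner ℂ z' x' : ℂ)‖ := by rw [norm_neg]
    _ ≤ (u + v) + (u + v) := by
        have := hCS.trans hcross
        linarith
    _ = 2 * (dNI x y + dNI y z) := by
        rw [dNI, dNI, ← ha, ← hb, ← hu, ← hv]; ring

lemma Sball_measurable' {n : ℕ} [MeasurableSpace (EuclideanSpace ℂ (Fin n))]
    [BorelSpace (EuclideanSpace ℂ (Fin n))]
    (x : EuclideanSpace ℂ (Fin n)) (r : ℝ) : MeasurableSet (Sball x r) := by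
  have h1 : Sball x r =
      (Metric.sphere (0 : EuclideanSpace ℂ (Fin n)) 1) ∩ {z | dNI x z < r} := by
    ext z
    simp [Sball, mem_sphere_zero_iff_norm]
  rw [h1]
  refine (Metric.isClosed_sphere.measurableSet).inter ?_
  have hc : Continuous fun z : EuclideanSpace ℂ (Fin n) => dNI x z := by
    have h0 : Continuous fun z : EuclideanSpace ℂ (Fin n) => (inner ℂ z x : ℂ) :=
      Continuous.inner continuous_id continuous_const
    have h2 : Continuous fun z : EuclideanSpace ℂ (Fin n) => (1 - (inner ℂ z x : ℂ)) :=
      continuous_const.sub h0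
    simpa [dNI] using h2.norm
  exact (isOpen_lt hc continuous_const).measurableSet

theorem sigma_implies_upsilon (n : ℕ)
    [MeasurableSpace (EuclideanSpace ℂ (Fin n))]
    [BorelSpace (EuclideanSpace ℂ (Fin n))]
    (E : Set (EuclideanSpace ℂ (Fin n)))
    (hEclosed : IsClosed E) (hES : E ⊆ Metric.sphere 0 1) (hEne : E.Nonempty)
    (σ : Measure (EuclideanSpace ℂ (Fin n)))
    (c₀ C₀ : ℝ) (hc₀ : 0 < c₀) (hC₀ : 0 < C₀)
    (hσlow : ∀ x : EuclideanSpace ℂ (Fin n), ‖x‖ = 1 → ∀ r : ℝ, 0 < r → r ≤ 1 →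
      ENNReal.ofReal (c₀ * r ^ (n : ℝ)) ≤ σ (Sball x r))
    (hσup : ∀ x : EuclideanSpace ℂ (Fin n), ‖x‖ = 1 → ∀ r : ℝ, 0 < r →
      σ (Sball x r) ≤ ENNReal.ofReal (C₀ * r ^ (n : ℝ)))
    (s C : ℝ) (hs : s < n) (hC : 0 < C)
    -- E satisfies Σ_s :
    (hSig : ∀ x : EuclideanSpace ℂ (Fin n), ‖x‖ = 1 → ∀ R ε : ℝ, 0 < ε → ε < R →
      σ (Sball x R ∩ {z | ‖z‖ = 1 ∧ dE E z < ε}) ≤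
        ENNReal.ofReal (C * R ^ s * ε ^ ((n : ℝ) - s))) :
    -- conclusion : (E,d) ∈ Υ_s
    ∃ C' > 0, ∀ x ∈ E, ∀ (R k : ℝ), 0 < R → 1 ≤ k → k * R ≤ 1 →
      ∀ T : Finset (EuclideanSpace ℂ (Fin n)),
        (↑T ⊆ {z ∈ E | dNI x z < k * R}) →
        (∀ p ∈ T, ∀ q ∈ T, p ≠ q → R ≤ dNI p q) →
        (T.card : ℝ) ≤ C' * k ^ s := by
  refine ⟨C * (24 : ℝ) ^ s / c₀, by positivity, ?_⟩
  intro x hxE R k hR hk hkR T hTsub hTsep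
  have hx1 : ‖x‖ = 1 := mem_sphere_zero_iff_norm.mp (hES hxE)
  have hRk : R ≤ k * R := le_mul_of_one_le_left hR.le hk
  set ρ := R / 8 with hρ
  have hρpos : 0 < ρ := by positivity
  have hρle1 : ρ ≤ 1 := by
    have : R ≤ 1 := hRk.trans hkR
    rw [hρ]; linarith
  -- facts about points of T
  have hTfacts : ∀ p ∈ T, ‖p‖ = 1 ∧ p ∈ E ∧ dNI x p < k * R := by
    intro p hp
    have := hTsub hp
    simp only [Set.mem_setOf_eq, Set.mem_sep_iff] at this
    exact ⟨mem_sphere_zero_iff_norm.mp (hES this.1), this.1, this.2⟩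
  -- disjointness of the small balls
  have hdisj : (↑T : Set (EuclideanSpace ℂ (Fin n))).PairwiseDisjoint
      (fun p => Sball p ρ) := by
    intro p hp q hq hpq
    rw [Function.onFun, Set.disjoint_left]
    intro z hzp hzq
    have hp1 := (hTfacts p hp).1
    have hq1 := (hTfacts q hq).1
    have hz1 : ‖z‖ = 1 := hzp.1
    have h1 : dNI p z < ρ := hzp.2
    have h2 : dNI z q < ρ := by rw [← dNI_symm']; exact hzq.2
    have h3 : dNI p q ≤ 2 * (dNI p z + dNI z q) := dNI_quasi' hp1 hz1 hq1
    have h4 : R ≤ dNI p q := hTsep p hp q hq hpq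
    rw [hρ] at h1 h2
    linarith
  -- the union of small balls sits inside a big ball intersected with E_ρ
  have hsub : (⋃ p ∈ T, Sball p ρ) ⊆
      Sball x (3 * (k * R)) ∩ {z | ‖z‖ = 1 ∧ dE E z < ρ} := by
    intro z hz
    simp only [Set.mem_iUnion] at hz
    obtain ⟨p, hp, hzp⟩ := hz
    obtain ⟨hp1, hpE, hpx⟩ := hTfacts p hp
    have hz1 : ‖z‖ = 1 := hzp.1
    have hpz : dNI p z < ρ := hzp.2
    constructor
    · refine ⟨hz1, ?_⟩
      have h3 : dNI x z ≤ 2 * (dNI x p + dNI p z) := dNI_quasi' hx1 hp1 hz1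
      rw [hρ] at hpz
      linarith
    · refine ⟨hz1, ?_⟩
      have hle : dE E z ≤ dNI z p := by
        apply csInf_le
        · exact ⟨0, by rintro w ⟨e, _, rfl⟩; exact dNI_nonneg' z e⟩
        · exact ⟨p, hpE, rfl⟩
      calc dE E z ≤ dNI z p := hle
        _ = dNI p z := (dNI_symm' z p)
        _ < ρ := hpz
  -- the key measure estimate
  have hρ3 : ρ < 3 * (k * R) := by
    rw [hρ]; nlinarith
  have key : (T.card : ℝ≥0∞) * ENNReal.ofReal (c₀ * ρ ^ (n : ℝ)) ≤
      ENNReal.ofReal (C * (3 * (k * R)) ^ s * ρ ^ ((n : ℝ) - s)) := by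
    calc (T.card : ℝ≥0∞) * ENNReal.ofReal (c₀ * ρ ^ (n : ℝ))
        = ∑ p ∈ T, ENNReal.ofReal (c₀ * ρ ^ (n : ℝ)) := by
          rw [Finset.sum_const, nsmul_eq_mul]
      _ ≤ ∑ p ∈ T, σ (Sball p ρ) := by
          refine Finset.sum_le_sum fun p hp => ?_
          exact hσlow p (hTfacts p hp).1 ρ hρpos hρle1
      _ = σ (⋃ p ∈ T, Sball p ρ) :=
          (measure_biUnion_finset hdisj fun p _ => Sball_measurable' p ρ).symm
      _ ≤ σ (Sball x (3 * (k * R)) ∩ {z | ‖z‖ = 1 ∧ dE E z < ρ}) := measure_mono hsub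
      _ ≤ ENNReal.ofReal (C * (3 * (k * R)) ^ s * ρ ^ ((n : ℝ) - s)) :=
          hSig x hx1 (3 * (k * R)) ρ hρpos hρ3
  -- pass to real numbers
  have hreal : (T.card : ℝ) * (c₀ * ρ ^ (n : ℝ)) ≤
      C * (3 * (k * R)) ^ s * ρ ^ ((n : ℝ) - s) := by
    have h1 : ENNReal.ofReal ((T.card : ℝ) * (c₀ * ρ ^ (n : ℝ))) ≤
        ENNReal.ofReal (C * (3 * (k * R)) ^ s * ρ ^ ((n : ℝ) - s)) := by
      rw [ENNReal.ofReal_mul (by positivity), ENNReal.ofReal_natCast]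
      exact key
    exact (ENNReal.ofReal_le_ofReal_iff (by positivity)).mp h1
  -- algebraic identity
  have heq : C * (3 * (k * R)) ^ s * ρ ^ ((n : ℝ) - s) =
      (C * (24 : ℝ) ^ s / c₀ * k ^ s) * (c₀ * ρ ^ (n : ℝ)) := by
    have hkpos : (0 : ℝ) < k := lt_of_lt_of_le one_pos hk
    have h24 : (24 : ℝ) ^ s = 3 ^ s * 8 ^ s := by
      rw [← Real.mul_rpow (by norm_num) (by norm_num)]; norm_num
    have hmul : (3 * (k * R)) ^ s = 3 ^ s * k ^ s * R ^ s := by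
      rw [Real.mul_rpow (by norm_num) (by positivity), Real.mul_rpow hkpos.le hR.le]; ring
    have hρns : ρ ^ ((n : ℝ) - s) = ρ ^ (n : ℝ) / ρ ^ s := Real.rpow_sub hρpos _ _
    have hρs : ρ ^ s = R ^ s / 8 ^ s := by
      rw [hρ, Real.div_rpow hR.le (by norm_num)]
    have h8 : (0 : ℝ) < 8 ^ s := Real.rpow_pos_of_pos (by norm_num) s
    have hRs : (0 : ℝ) < R ^ s := Real.rpow_pos_of_pos hR s
    rw [hmul, hρns, hρs, h24]
    field_simp
  rw [heq] at hreal
  have hpos : 0 < c₀ * ρ ^ (n : ℝ) := by positivity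
  exact le_of_mul_le_mul_right hreal hpos
end

section
/- Let E ⊂ S be closed satisfying condition (h) of the equivalence theorem: there is a₀ > 1 such that for every a < a₀ there is C with ∫_{B(x,R)} d(z,E)^{-a} dV(z) ≤ C R^{n+1-a} for all x ∈ S, R > 0 (equivalently Υ(E) ≤ s := n+1-a₀ < n). Let a > s - n - 1, b < n and a - b + n + 1 > 0. Then the integral ∫_{B^n} d(z,E)^a d(ζ,z)^{-b} dV(z) is bounded by a constant independent of ζ ∈ E. -/
open MeasureTheory
open scoped ENNReal NNReal
set_option linter.unusedSectionVars false
set_option linter.unusedVariables false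


namespace Cotillas

variable {n : ℕ} {E : Set (EuclideanSpace ℂ (Fin n))}

lemma dNI_nonneg (x y : EuclideanSpace ℂ (Fin n)) : 0 ≤ dNI x y :=
  norm_nonneg _

lemma dNI_symm (x y : EuclideanSpace ℂ (Fin n)) : dNI x y = dNI y x := by
  unfold dNI
  rw [← inner_conj_symm x y]
  rw [show (1 : ℂ) - (starRingEnd ℂ) (inner ℂ y x) = (starRingEnd ℂ) (1 - inner ℂ y x) by
    rw [map_sub, map_one]]
  rw [Complex.norm_conj]

lemma dE_nonneg (z : EuclideanSpace ℂ (Fin n)) : 0 ≤ dE E z := by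
  apply Real.sInf_nonneg
  rintro t ⟨x, -, rfl⟩; exact dNI_nonneg _ _

lemma bddBelow_dNI (z : EuclideanSpace ℂ (Fin n)) : BddBelow (dNI z '' E) :=
  ⟨0, by rintro t ⟨x, -, rfl⟩; exact dNI_nonneg _ _⟩

lemma dE_le {x : EuclideanSpace ℂ (Fin n)} (hx : x ∈ E) (z : EuclideanSpace ℂ (Fin n)) :
    dE E z ≤ dNI z x :=
  csInf_le (bddBelow_dNI z) ⟨x, hx, rfl⟩

lemma dNI_ge (hES : E ⊆ Metric.sphere 0 1) {x : EuclideanSpace ℂ (Fin n)} (hx : x ∈ E)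
    (z : EuclideanSpace ℂ (Fin n)) : 1 - ‖z‖ ≤ dNI z x := by
  have hxn : ‖x‖ = 1 := by simpa using hES hx
  have h1 : ‖(inner ℂ x z : ℂ)‖ ≤ ‖z‖ := by
    calc ‖(inner ℂ x z : ℂ)‖ ≤ ‖x‖ * ‖z‖ := norm_inner_le_norm x z
    _ = ‖z‖ := by rw [hxn, one_mul]
  have h2 : (1:ℝ) - ‖(inner ℂ x z : ℂ)‖ ≤ ‖1 - (inner ℂ x z : ℂ)‖ := by
    have := norm_sub_norm_le (1 : ℂ) (inner ℂ x z : ℂ)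
    simpa using this
  unfold dNI
  linarith

lemma dE_ge (hES : E ⊆ Metric.sphere 0 1) (hEne : E.Nonempty) (z : EuclideanSpace ℂ (Fin n)) :
    1 - ‖z‖ ≤ dE E z :=
  le_csInf (hEne.image _) (by rintro t ⟨x, hx, rfl⟩; exact dNI_ge hES hx z)

lemma dNI_le (hES : E ⊆ Metric.sphere 0 1) {x : EuclideanSpace ℂ (Fin n)} (hx : x ∈ E)
    (z : EuclideanSpace ℂ (Fin n)) : dNI z x ≤ 1 + ‖z‖ := by
  have hxn : ‖x‖ = 1 := by simpa using hES hx
  have h1 : ‖(inner ℂ x z : ℂ)‖ ≤ ‖z‖ := by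
    calc ‖(inner ℂ x z : ℂ)‖ ≤ ‖x‖ * ‖z‖ := norm_inner_le_norm x z
    _ = ‖z‖ := by rw [hxn, one_mul]
  have h2 := norm_sub_le (1 : ℂ) (inner ℂ x z : ℂ)
  unfold dNI
  have h3 : ‖(1 : ℂ)‖ = 1 := by simp
  linarith

lemma dNI_dNI (hES : E ⊆ Metric.sphere 0 1) {x : EuclideanSpace ℂ (Fin n)} (hx : x ∈ E)
    (u v : EuclideanSpace ℂ (Fin n)) : dNI u x ≤ dNI v x + dist u v := by
  have hxn : ‖x‖ = 1 := by simpa using hES hx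
  unfold dNI
  have h1 : ‖1 - inner ℂ x u‖ ≤
      ‖1 - inner ℂ x v‖ + ‖(inner ℂ x v : ℂ) - inner ℂ x u‖ := by
    calc ‖1 - inner ℂ x u‖
        = ‖(1 - inner ℂ x v) + ((inner ℂ x v : ℂ) - inner ℂ x u)‖ := by ring_nf
      _ ≤ _ := norm_add_le _ _
  have h2 : ‖(inner ℂ x v : ℂ) - inner ℂ x u‖ ≤ dist u v := by
    have e : (inner ℂ x v : ℂ) - inner ℂ x u = inner ℂ x (v - u) := (inner_sub_right x v u).symm
    rw [e]
    calc ‖inner ℂ x (v - u)‖ = ‖(inner ℂ x (v - u) : ℂ)‖ := rfl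
      _ ≤ ‖x‖ * ‖v - u‖ := norm_inner_le_norm _ _
      _ = ‖v - u‖ := by rw [hxn, one_mul]
      _ = dist u v := by rw [dist_eq_norm, norm_sub_rev]
  linarith

lemma dE_sub_le (hES : E ⊆ Metric.sphere 0 1) (hEne : E.Nonempty)
    (u v : EuclideanSpace ℂ (Fin n)) : dE E u ≤ dE E v + dist u v := by
  have h : dE E u - dist u v ≤ dE E v := by
    apply le_csInf (hEne.image _)
    rintro t ⟨x, hx, rfl⟩
    have h1 : dE E u ≤ dNI u x := dE_le hx u
    have h2 := dNI_dNI hES hx u v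
    linarith
  linarith

lemma dE_continuous (hES : E ⊆ Metric.sphere 0 1) (hEne : E.Nonempty) :
    Continuous (dE E) := by
  apply LipschitzWith.continuous (K := 1)
  apply LipschitzWith.of_dist_le_mul
  intro u v
  rw [NNReal.coe_one, one_mul, Real.dist_eq, abs_sub_le_iff]
  constructor
  · have := dE_sub_le hES hEne u v; linarith
  · have := dE_sub_le hES hEne v u; rw [dist_comm] at this; linarith

lemma dNI_continuous (ζ : EuclideanSpace ℂ (Fin n)) : Continuous (fun z => dNI ζ z) := by
  unfold dNI
  exact continuous_norm.comp (continuous_const.sub (continuous_id.inner continuous_const))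

/-- The dyadic annuli. -/
def Ann (ζ : EuclideanSpace ℂ (Fin n)) (k : ℕ) : Set (EuclideanSpace ℂ (Fin n)) :=
  {z | ‖z‖ < 1 ∧ 2 * (2⁻¹ : ℝ) ^ (k + 1) < dNI ζ z ∧ dNI ζ z ≤ 2 * (2⁻¹ : ℝ) ^ k}

lemma exists_dyadic {t : ℝ} (h0 : 0 < t) (h2 : t ≤ 2) :
    ∃ k : ℕ, 2 * (2⁻¹ : ℝ) ^ (k + 1) < t ∧ t ≤ 2 * (2⁻¹ : ℝ) ^ k := by
  classical
  have hex : ∃ m : ℕ, (2⁻¹ : ℝ) ^ m < t / 2 :=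
    exists_pow_lt_of_lt_one (by linarith) (by norm_num)
  set M := Nat.find hex with hMdef
  have hM : (2⁻¹ : ℝ) ^ M < t / 2 := Nat.find_spec hex
  have hM0 : M ≠ 0 := by
    intro h
    rw [h] at hM
    simp at hM
    linarith
  refine ⟨M - 1, ?_, ?_⟩
  · have hMm : M - 1 + 1 = M := Nat.succ_pred_eq_of_pos (Nat.pos_of_ne_zero hM0)
    rw [hMm]; linarith
  · have := Nat.find_min hex (m := M - 1) (Nat.pred_lt hM0)
    push_neg at this
    linarith

lemma ball_subset_iUnion_Ann (hES : E ⊆ Metric.sphere 0 1)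
    {ζ : EuclideanSpace ℂ (Fin n)} (hζ : ζ ∈ E) :
    Metric.ball (0 : EuclideanSpace ℂ (Fin n)) 1 ⊆ ⋃ k, Ann ζ k := by
  intro z hz
  have hznorm : ‖z‖ < 1 := by simpa using hz
  have h0 : 0 < dNI ζ z := by
    have := dNI_ge hES hζ z
    rw [dNI_symm]
    linarith
  have h2 : dNI ζ z ≤ 2 := by
    have := dNI_le hES hζ z
    rw [dNI_symm]
    linarith
  obtain ⟨k, hk1, hk2⟩ := exists_dyadic h0 h2
  exact Set.mem_iUnion.mpr ⟨k, hznorm, hk1, hk2⟩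

lemma xpow_eq (k : ℕ) (θ : ℝ) : (((2:ℝ)⁻¹ ^ k : ℝ)) ^ θ = ((2⁻¹ : ℝ) ^ θ) ^ k := by
  rw [← Real.rpow_natCast (2⁻¹ : ℝ) k, ← Real.rpow_mul (by norm_num), mul_comm,
    Real.rpow_mul (by norm_num), Real.rpow_natCast]

lemma pow_bound {t x : ℝ} (b : ℝ) (hx : 0 < x) (h1 : x < t) (h2 : t ≤ 2 * x) :
    t ^ (-b) ≤ 2 ^ |b| * (2 * x) ^ (-b) := by
  have ht : 0 < t := lt_trans hx h1
  have h2x : (0:ℝ) < 2 * x := by linarith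
  have habs : (1:ℝ) ≤ 2 ^ |b| := by
    have := Real.rpow_le_rpow_of_exponent_le one_le_two (abs_nonneg b)
    rwa [Real.rpow_zero] at this
  rcases le_or_gt 0 b with hb | hb
  · have hstep : t ^ (-b) ≤ x ^ (-b) :=
      Real.rpow_le_rpow_of_nonpos hx h1.le (neg_nonpos.mpr hb)
    have hxe : x = 2 * x * 2⁻¹ := by ring
    have hsplit : x ^ (-b) = (2 * x) ^ (-b) * (2⁻¹ : ℝ) ^ (-b) := by
      rw [hxe, Real.mul_rpow h2x.le (by norm_num)]
      rw [show ((2:ℝ) * x * 2⁻¹) = x by ring]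
    have hinv : (2⁻¹ : ℝ) ^ (-b) = 2 ^ b := by
      rw [Real.inv_rpow (by norm_num : (0:ℝ) ≤ 2), Real.rpow_neg (by norm_num), inv_inv]
    have hbb : (2:ℝ) ^ b ≤ 2 ^ |b| := Real.rpow_le_rpow_of_exponent_le one_le_two (le_abs_self b)
    calc t ^ (-b) ≤ x ^ (-b) := hstep
      _ = (2 * x) ^ (-b) * (2:ℝ) ^ b := by rw [hsplit, hinv]
      _ ≤ (2 * x) ^ (-b) * (2:ℝ) ^ |b| := by
          apply mul_le_mul_of_nonneg_left hbb (Real.rpow_nonneg h2x.le _)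
      _ = 2 ^ |b| * (2 * x) ^ (-b) := by ring
  · have hstep : t ^ (-b) ≤ (2 * x) ^ (-b) :=
      Real.rpow_le_rpow ht.le h2 (by linarith)
    calc t ^ (-b) ≤ (2 * x) ^ (-b) := hstep
      _ = 1 * (2 * x) ^ (-b) := by ring
      _ ≤ 2 ^ |b| * (2 * x) ^ (-b) := by
          apply mul_le_mul_of_nonneg_right habs (Real.rpow_nonneg h2x.le _)

section Measure

variable {n : ℕ} {E : Set (EuclideanSpace ℂ (Fin n))}
  [MeasurableSpace (EuclideanSpace ℂ (Fin n))] [BorelSpace (EuclideanSpace ℂ (Fin n))]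
  (V : Measure (EuclideanSpace ℂ (Fin n))) [V.IsAddHaarMeasure]

lemma main_sum (hES : E ⊆ Metric.sphere 0 1) {ζ : EuclideanSpace ℂ (Fin n)} (hζ : ζ ∈ E)
    (F : EuclideanSpace ℂ (Fin n) → ℝ) {D ρ : ℝ} (hD : 0 ≤ D) (hρ : 0 ≤ ρ)
    (hann : ∀ k : ℕ, ∫⁻ z in Ann ζ k, ENNReal.ofReal (F z) ∂V ≤ ENNReal.ofReal (D * ρ ^ k)) :
    ∫⁻ z in Metric.ball (0 : EuclideanSpace ℂ (Fin n)) 1, ENNReal.ofReal (F z) ∂V ≤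
      ENNReal.ofReal D * (1 - ENNReal.ofReal ρ)⁻¹ := by
  calc ∫⁻ z in Metric.ball (0 : EuclideanSpace ℂ (Fin n)) 1, ENNReal.ofReal (F z) ∂V
      ≤ ∫⁻ z in ⋃ k, Ann ζ k, ENNReal.ofReal (F z) ∂V :=
        lintegral_mono_set (ball_subset_iUnion_Ann hES hζ)
    _ ≤ ∑' k : ℕ, ∫⁻ z in Ann ζ k, ENNReal.ofReal (F z) ∂V := lintegral_iUnion_le _ _
    _ ≤ ∑' k : ℕ, ENNReal.ofReal (D * ρ ^ k) := ENNReal.tsum_le_tsum hann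
    _ = ENNReal.ofReal D * ∑' k : ℕ, (ENNReal.ofReal ρ) ^ k := by
        simp_rw [ENNReal.ofReal_mul hD, ENNReal.ofReal_pow hρ]
        rw [ENNReal.tsum_mul_left]
    _ = ENNReal.ofReal D * (1 - ENNReal.ofReal ρ)⁻¹ := by rw [ENNReal.tsum_geometric]

lemma Ann_subset_cap {ζ : EuclideanSpace ℂ (Fin n)} (hζn : ‖ζ‖ = 1) (k : ℕ) :
    Ann ζ k ⊆ Metric.closedBall ζ (Real.sqrt (4 * (2⁻¹ : ℝ) ^ k)) := by
  rintro z ⟨h1, h2, h3⟩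
  have hb : ‖z - ζ‖ ^ 2 ≤ 4 * (2⁻¹ : ℝ) ^ k := by
    have hns : ‖z - ζ‖ ^ 2 = ‖z‖ ^ 2 - 2 * Complex.re (inner ℂ z ζ : ℂ) + ‖ζ‖ ^ 2 := by
      exact_mod_cast @norm_sub_sq ℂ _ _ _ _ z ζ
    have hre : 1 - Complex.re (inner ℂ z ζ : ℂ) ≤ dNI ζ z := by
      have : (1 - (inner ℂ z ζ : ℂ)).re ≤ ‖1 - (inner ℂ z ζ : ℂ)‖ :=
        Complex.re_le_norm _
      simpa [Complex.sub_re, Complex.one_re, dNI] using this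
    nlinarith [norm_nonneg z, sq_nonneg ‖z‖, h1.le, hζn]
  have hnn : (0:ℝ) ≤ 4 * (2⁻¹ : ℝ) ^ k := by positivity
  rw [Metric.mem_closedBall, dist_eq_norm]
  exact (Real.le_sqrt (norm_nonneg _) hnn).mpr hb

lemma cap_volume {ζ : EuclideanSpace ℂ (Fin n)} (hζn : ‖ζ‖ = 1) (k : ℕ) :
    V (Ann ζ k) ≤ ENNReal.ofReal ((4 * (2⁻¹ : ℝ) ^ k) ^ n) *
      V (Metric.ball (0 : EuclideanSpace ℂ (Fin n)) 1) := by
  have h1 : V (Ann ζ k) ≤ V (Metric.closedBall ζ (Real.sqrt (4 * (2⁻¹ : ℝ) ^ k))) :=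
    measure_mono (Ann_subset_cap hζn k)
  have hnn : (0:ℝ) ≤ 4 * (2⁻¹ : ℝ) ^ k := by positivity
  have h2 : V (Metric.closedBall ζ (Real.sqrt (4 * (2⁻¹ : ℝ) ^ k))) =
      ENNReal.ofReal ((Real.sqrt (4 * (2⁻¹ : ℝ) ^ k)) ^
        Module.finrank ℝ (EuclideanSpace ℂ (Fin n))) *
      V (Metric.ball (0 : EuclideanSpace ℂ (Fin n)) 1) :=
    Measure.addHaar_closedBall V ζ (Real.sqrt_nonneg _)
  have hfr : Module.finrank ℝ (EuclideanSpace ℂ (Fin n)) = 2 * n := by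
    simp [EuclideanSpace, PiLp, WithLp, Module.finrank_pi_fintype,
      Complex.finrank_real_complex, mul_comm]
    rw [(WithLp.linearEquiv 2 ℝ (Fin n → ℂ)).finrank_eq]
    simp [Module.finrank_pi_fintype, Complex.finrank_real_complex]
  have h3 : (Real.sqrt (4 * (2⁻¹ : ℝ) ^ k)) ^ Module.finrank ℝ (EuclideanSpace ℂ (Fin n)) =
      (4 * (2⁻¹ : ℝ) ^ k) ^ n := by
    rw [hfr, pow_mul, Real.sq_sqrt hnn]
  rw [h2, h3] at h1
  exact h1

end Measure

end Cotillas

open Cotillas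

theorem cotillas (n : ℕ)
    [MeasurableSpace (EuclideanSpace ℂ (Fin n))]
    [BorelSpace (EuclideanSpace ℂ (Fin n))]
    (E : Set (EuclideanSpace ℂ (Fin n)))
    (hEclosed : IsClosed E) (hES : E ⊆ Metric.sphere 0 1) (hEne : E.Nonempty)
    (V : Measure (EuclideanSpace ℂ (Fin n))) [V.IsAddHaarMeasure]
    (a₀ : ℝ) (ha₀ : 1 < a₀)
    -- condition (h) of the equivalence theorem :
    (hcond : ∀ a' : ℝ, 0 < a' → a' < a₀ → ∃ C > 0,
      ∀ x : EuclideanSpace ℂ (Fin n), ‖x‖ = 1 → ∀ R : ℝ, 0 < R →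
        ∫ z in {z | ‖z‖ < 1 ∧ dNI x z < R}, (dE E z) ^ (-a') ∂V ≤
          C * R ^ ((n : ℝ) + 1 - a'))
    (a b : ℝ)
    (ha : ((n : ℝ) + 1 - a₀) - (n : ℝ) - 1 < a) (hb : b < n)
    (hab : 0 < a - b + (n : ℝ) + 1) :
    ∃ K > 0, ∀ ζ ∈ E,
      ∫ z in Metric.ball (0 : EuclideanSpace ℂ (Fin n)) 1,
          (dE E z) ^ a * (dNI ζ z) ^ (-b) ∂V ≤ K := by
  classical
  have hdEc : Continuous (dE E) := dE_continuous hES hEne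
  set B := Metric.ball (0 : EuclideanSpace ℂ (Fin n)) 1 with hBdef
  have hrpow : ∀ c : ℝ, Measurable fun t : ℝ => t ^ c := fun c => by measurability
  have hgm : Measurable fun z => dE E z ^ a := (hrpow a).comp hdEc.measurable
  have hfm : ∀ ζ : EuclideanSpace ℂ (Fin n),
      Measurable fun z => dE E z ^ a * dNI ζ z ^ (-b) := fun ζ =>
    hgm.mul ((hrpow (-b)).comp (dNI_continuous ζ).measurable)
  have hfnn : ∀ (ζ z : EuclideanSpace ℂ (Fin n)), 0 ≤ dE E z ^ a * dNI ζ z ^ (-b) := by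
    intro ζ z
    have := dE_nonneg (E := E) z
    have := dNI_nonneg ζ z
    positivity
  have hEq : ∀ ζ : EuclideanSpace ℂ (Fin n), ∫ z in B, dE E z ^ a * dNI ζ z ^ (-b) ∂V =
      (∫⁻ z in B, ENNReal.ofReal (dE E z ^ a * dNI ζ z ^ (-b)) ∂V).toReal := fun ζ =>
    integral_eq_lintegral_of_nonneg_ae (Filter.Eventually.of_forall (hfnn ζ))
      (hfm ζ).aestronglyMeasurable
  have wrap : ∀ Bnd : ℝ≥0∞, Bnd ≠ ⊤ →
      (∀ ζ ∈ E, ∫⁻ z in B, ENNReal.ofReal (dE E z ^ a * dNI ζ z ^ (-b)) ∂V ≤ Bnd) →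
      ∃ K > 0, ∀ ζ ∈ E, ∫ z in B, dE E z ^ a * dNI ζ z ^ (-b) ∂V ≤ K := by
    intro Bnd hne hBd
    refine ⟨Bnd.toReal + 1, by positivity, fun ζ hζ => ?_⟩
    rw [hEq ζ]
    have := ENNReal.toReal_mono hne (hBd ζ hζ)
    linarith
  rcases lt_or_ge a 0 with haneg | hapos
  · -- a < 0 : use hcond with exponent -a
    by_cases hInt : IntegrableOn (fun z => dE E z ^ a) B V
    · -- CASE 1 : the weight is integrable, main estimate
      obtain ⟨C, hC, hCb⟩ := hcond (-a) (by linarith) (by linarith)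
      set θ : ℝ := a - b + (n : ℝ) + 1 with hθdef
      have hθ : 0 < θ := hab
      set ρ : ℝ := (2⁻¹ : ℝ) ^ θ with hρdef
      have hρ0 : 0 ≤ ρ := Real.rpow_nonneg (by norm_num) _
      have hρ1 : ρ < 1 := Real.rpow_lt_one (by norm_num) (by norm_num) hθ
      set γ : ℝ := (n : ℝ) + 1 - -a with hγdef
      set D : ℝ := 2 ^ |b| * 2 ^ (-b) * (C * 4 ^ γ) with hDdef
      have hD : 0 ≤ D := by positivity
      apply wrap (ENNReal.ofReal D * (1 - ENNReal.ofReal ρ)⁻¹)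
      · apply ENNReal.mul_ne_top ENNReal.ofReal_ne_top
        rw [ENNReal.inv_ne_top]
        intro h
        rw [tsub_eq_zero_iff_le] at h
        exact absurd (lt_of_le_of_lt h (ENNReal.ofReal_lt_one.mpr hρ1)) (lt_irrefl _)
      · intro ζ hζ
        have hζn : ‖ζ‖ = 1 := by simpa using hES hζ
        apply main_sum V hES hζ _ hD hρ0
        intro k
        set x : ℝ := (2⁻¹ : ℝ) ^ k with hxdef
        have hx : 0 < x := by positivity
        set Q : ℝ := 2 ^ |b| * (2 * x) ^ (-b) with hQdef
        have hQ : 0 ≤ Q := by positivity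
        set W := {z : EuclideanSpace ℂ (Fin n) | ‖z‖ < 1 ∧ dNI ζ z < 4 * x} with hWdef
        have hAB : Ann ζ k ⊆ B := by
          rintro z ⟨h1, -, -⟩
          exact mem_ball_zero_iff.mpr h1
        have hAW : Ann ζ k ⊆ W := by
          rintro z ⟨h1, h2, h3⟩
          exact ⟨h1, by linarith⟩
        have hWB : W ⊆ B := by
          rintro z ⟨h1, -⟩
          exact mem_ball_zero_iff.mpr h1
        have hpt : ∀ z ∈ Ann ζ k, dE E z ^ a * dNI ζ z ^ (-b) ≤ Q * dE E z ^ a := by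
          rintro z ⟨h1, h2, h3⟩
          have hlo : x < dNI ζ z := by
            have he : 2 * (2⁻¹ : ℝ) ^ (k + 1) = x := by
              rw [hxdef, pow_succ]; ring
            rwa [he] at h2
          have e2 : dNI ζ z ^ (-b) ≤ Q := pow_bound b hx hlo h3
          calc dE E z ^ a * dNI ζ z ^ (-b) ≤ dE E z ^ a * Q :=
              mul_le_mul_of_nonneg_left e2 (Real.rpow_nonneg (dE_nonneg z) a)
            _ = Q * dE E z ^ a := mul_comm _ _
        have hgnn : 0 ≤ᵐ[V.restrict (Ann ζ k)] fun z => dE E z ^ a :=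
          Filter.Eventually.of_forall fun z => Real.rpow_nonneg (dE_nonneg z) a
        have hCgoal := hCb ζ hζn (4 * x) (by positivity)
        have hWint : ∫ z in W, dE E z ^ a ∂V ≤ C * (4 * x) ^ γ := by
          simpa using hCgoal
        calc ∫⁻ z in Ann ζ k, ENNReal.ofReal (dE E z ^ a * dNI ζ z ^ (-b)) ∂V
            ≤ ∫⁻ z in Ann ζ k, ENNReal.ofReal (Q * dE E z ^ a) ∂V :=
              setLIntegral_mono ((hgm.const_mul Q).ennreal_ofReal)
                (fun z hz => ENNReal.ofReal_le_ofReal (hpt z hz))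
          _ = ENNReal.ofReal Q * ∫⁻ z in Ann ζ k, ENNReal.ofReal (dE E z ^ a) ∂V := by
              simp_rw [ENNReal.ofReal_mul hQ]
              rw [lintegral_const_mul' _ _ ENNReal.ofReal_ne_top]
          _ = ENNReal.ofReal Q * ENNReal.ofReal (∫ z in Ann ζ k, dE E z ^ a ∂V) := by
              rw [ofReal_integral_eq_lintegral_ofReal (hInt.mono_set hAB) hgnn]
          _ ≤ ENNReal.ofReal Q * ENNReal.ofReal (∫ z in W, dE E z ^ a ∂V) := by
              apply mul_le_mul_right
              apply ENNReal.ofReal_le_ofReal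
              exact setIntegral_mono_set (hInt.mono_set hWB)
                (Filter.Eventually.of_forall fun z => Real.rpow_nonneg (dE_nonneg z) a)
                (HasSubset.Subset.eventuallyLE hAW)
          _ ≤ ENNReal.ofReal Q * ENNReal.ofReal (C * (4 * x) ^ γ) := by
              apply mul_le_mul_right
              exact ENNReal.ofReal_le_ofReal hWint
          _ ≤ ENNReal.ofReal (D * ρ ^ k) := by
              rw [← ENNReal.ofReal_mul hQ]
              apply ENNReal.ofReal_le_ofReal
              apply le_of_eq
              have e1 : ((2:ℝ) * x) ^ (-b) = 2 ^ (-b) * x ^ (-b) :=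
                Real.mul_rpow (by norm_num) hx.le
              have e2 : ((4:ℝ) * x) ^ γ = 4 ^ γ * x ^ γ :=
                Real.mul_rpow (by norm_num) hx.le
              have e3 : x ^ (-b) * x ^ γ = x ^ θ := by
                rw [← Real.rpow_add hx]
                congr 1
                rw [hγdef, hθdef]; ring
              have e4 : x ^ θ = ρ ^ k := by
                rw [hρdef, hxdef]
                exact xpow_eq k θ
              calc Q * (C * (4 * x) ^ γ)
                  = 2 ^ |b| * 2 ^ (-b) * (C * 4 ^ γ) * (x ^ (-b) * x ^ γ) := by
                    rw [hQdef, e1, e2]; ring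
                _ = D * ρ ^ k := by rw [e3, e4, hDdef]
    · -- CASE 2 : the weight is NOT integrable
      have hginf : ∫⁻ z in B, ENNReal.ofReal (dE E z ^ a) ∂V = ⊤ := by
        by_contra hfin
        exact hInt ⟨hgm.aestronglyMeasurable,
          (hasFiniteIntegral_iff_ofReal (Filter.Eventually.of_forall fun z =>
            Real.rpow_nonneg (dE_nonneg z) a)).mpr (lt_top_iff_ne_top.mpr hfin)⟩
      set P : EuclideanSpace ℂ (Fin n) → Prop := fun w =>
        ∀ U : Set (EuclideanSpace ℂ (Fin n)), U ∈ nhds w →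
          ∫⁻ z in B ∩ U, ENNReal.ofReal (dE E z ^ a) ∂V = ⊤ with hPdef
      have hexP : ∃ w, P w := by
        by_contra hno
        push_neg at hno
        simp only [hPdef, not_forall] at hno
        have hno' : ∀ w : EuclideanSpace ℂ (Fin n), ∃ U ∈ nhds w,
            ∫⁻ z in B ∩ U, ENNReal.ofReal (dE E z ^ a) ∂V ≠ ⊤ := by
          intro w
          obtain ⟨U, hU, hfin⟩ := hno w
          exact ⟨U, hU, hfin⟩
        choose U hU hUfin using hno'
        obtain ⟨t, -, ht⟩ := (isCompact_closedBall (0 : EuclideanSpace ℂ (Fin n)) 1).elim_nhds_subcover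
          U (fun x _ => hU x)
        have hsub : B ⊆ ⋃ x : {x // x ∈ t}, (B ∩ U x) := by
          intro z hz
          have hz' : z ∈ Metric.closedBall (0 : EuclideanSpace ℂ (Fin n)) 1 :=
            Metric.ball_subset_closedBall hz
          obtain ⟨x, hx, hzU⟩ := Set.mem_iUnion₂.mp (ht hz')
          exact Set.mem_iUnion.mpr ⟨⟨x, hx⟩, hz, hzU⟩
        have hfin2 : ∫⁻ z in B, ENNReal.ofReal (dE E z ^ a) ∂V < ⊤ := by
          calc ∫⁻ z in B, ENNReal.ofReal (dE E z ^ a) ∂V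
              ≤ ∫⁻ z in ⋃ x : {x // x ∈ t}, (B ∩ U x), ENNReal.ofReal (dE E z ^ a) ∂V :=
                lintegral_mono_set hsub
            _ ≤ ∑' x : {x // x ∈ t}, ∫⁻ z in B ∩ U x, ENNReal.ofReal (dE E z ^ a) ∂V :=
                lintegral_iUnion_le _ _
            _ < ⊤ := by
                rw [tsum_fintype]
                apply ENNReal.sum_lt_top.mpr
                intro i _
                exact lt_top_iff_ne_top.mpr (hUfin i)
        rw [hginf] at hfin2
        exact absurd hfin2 (lt_irrefl _)
      obtain ⟨w, hw⟩ := hexP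
      have key : ∀ w' : EuclideanSpace ℂ (Fin n), P w' → ∀ ζ ∈ E, ζ ≠ w' →
          ∫ z in B, dE E z ^ a * dNI ζ z ^ (-b) ∂V = 0 := by
        intro w' hw' ζ hζ hne
        have hwb : ‖w'‖ ≤ 1 := by
          by_contra hgt
          push_neg at hgt
          have hU : {z : EuclideanSpace ℂ (Fin n) | 1 < ‖z‖} ∈ nhds w' :=
            (isOpen_lt continuous_const continuous_norm).mem_nhds hgt
          have hinf := hw' _ hU
          have hempty : B ∩ {z : EuclideanSpace ℂ (Fin n) | 1 < ‖z‖} = ∅ := by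
            ext z
            simp only [Set.mem_inter_iff, Set.mem_empty_iff_false, iff_false, not_and,
              Set.mem_setOf_eq]
            intro hz1
            have : ‖z‖ < 1 := mem_ball_zero_iff.mp hz1
            linarith
          rw [hempty] at hinf
          simp at hinf
        apply integral_undef
        intro hIf
        have hζn : ‖ζ‖ = 1 := by simpa using hES hζ
        have hpos : 0 < dNI ζ w' := by
          rcases (dNI_nonneg ζ w').lt_or_eq with h | h
          · exact h
          · exfalso
            have h0 : dNI ζ w' = 0 := h.symm
            unfold dNI at h0
            rw [norm_eq_zero, sub_eq_zero] at h0
            have h1 : (inner ℂ w' ζ : ℂ) = 1 := h0.symm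
            have hwn : ‖w'‖ = 1 := by
              have hle := norm_inner_le_norm (𝕜 := ℂ) w' ζ
              rw [h1, hζn, mul_one] at hle
              simp only [norm_one] at hle
              linarith
            exact hne ((inner_eq_one_iff_of_norm_eq_one hwn hζn).mp h1).symm
        set c : ℝ := dNI ζ w' / 2 with hcdef
        have hc : 0 < c := by positivity
        have hUmem : {z : EuclideanSpace ℂ (Fin n) | c < dNI ζ z} ∈ nhds w' := by
          apply (isOpen_lt continuous_const (dNI_continuous ζ)).mem_nhds
          simp only [Set.mem_setOf_eq, hcdef]
          linarith
        have hinf := hw' _ hUmem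
        set m : ℝ := min (c ^ (-b)) ((2:ℝ) ^ (-b)) with hmdef
        have hm : 0 < m := lt_min (Real.rpow_pos_of_pos hc _) (Real.rpow_pos_of_pos two_pos _)
        have hlow : ∀ z ∈ B ∩ {z : EuclideanSpace ℂ (Fin n) | c < dNI ζ z},
            ENNReal.ofReal (m * dE E z ^ a) ≤
              ENNReal.ofReal (dE E z ^ a * dNI ζ z ^ (-b)) := by
          rintro z ⟨hz1, hz2⟩
          apply ENNReal.ofReal_le_ofReal
          simp only [Set.mem_setOf_eq] at hz2
          have hzn : ‖z‖ < 1 := mem_ball_zero_iff.mp hz1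
          have h2 : dNI ζ z ≤ 2 := by
            have h2' := dNI_le hES hζ z
            rw [dNI_symm]
            linarith
          have hdlow : m ≤ dNI ζ z ^ (-b) := by
            rcases le_or_gt 0 (-b) with hbn | hbn
            · calc m ≤ c ^ (-b) := min_le_left _ _
                _ ≤ dNI ζ z ^ (-b) := Real.rpow_le_rpow hc.le hz2.le hbn
            · calc m ≤ 2 ^ (-b) := min_le_right _ _
                _ ≤ dNI ζ z ^ (-b) := Real.rpow_le_rpow_of_nonpos (lt_trans hc hz2) h2 hbn.le
          calc m * dE E z ^ a ≤ dNI ζ z ^ (-b) * dE E z ^ a :=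
              mul_le_mul_of_nonneg_right hdlow (Real.rpow_nonneg (dE_nonneg z) a)
            _ = dE E z ^ a * dNI ζ z ^ (-b) := mul_comm _ _
        have hbig : ∫⁻ z in B, ENNReal.ofReal (dE E z ^ a * dNI ζ z ^ (-b)) ∂V = ⊤ := by
          rw [eq_top_iff]
          calc (⊤ : ℝ≥0∞) = ENNReal.ofReal m *
              ∫⁻ z in B ∩ {z : EuclideanSpace ℂ (Fin n) | c < dNI ζ z},
                ENNReal.ofReal (dE E z ^ a) ∂V := by
                rw [hinf, ENNReal.mul_top ((ENNReal.ofReal_pos.mpr hm).ne')]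
            _ = ∫⁻ z in B ∩ {z : EuclideanSpace ℂ (Fin n) | c < dNI ζ z},
                ENNReal.ofReal (m * dE E z ^ a) ∂V := by
                simp_rw [ENNReal.ofReal_mul hm.le]
                rw [lintegral_const_mul' _ _ ENNReal.ofReal_ne_top]
            _ ≤ ∫⁻ z in B ∩ {z : EuclideanSpace ℂ (Fin n) | c < dNI ζ z},
                ENNReal.ofReal (dE E z ^ a * dNI ζ z ^ (-b)) ∂V :=
                setLIntegral_mono ((hfm ζ).ennreal_ofReal) hlow
            _ ≤ ∫⁻ z in B, ENNReal.ofReal (dE E z ^ a * dNI ζ z ^ (-b)) ∂V :=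
                lintegral_mono_set Set.inter_subset_left
        have hfinite : ∫⁻ z in B, ENNReal.ofReal (dE E z ^ a * dNI ζ z ^ (-b)) ∂V < ⊤ :=
          (hasFiniteIntegral_iff_ofReal (Filter.Eventually.of_forall (hfnn ζ))).mp
            hIf.hasFiniteIntegral
        rw [hbig] at hfinite
        exact absurd hfinite (lt_irrefl _)
      by_cases hw2 : ∃ w2, P w2 ∧ w2 ≠ w
      · obtain ⟨w2, hw2P, hww⟩ := hw2
        refine ⟨1, one_pos, fun ζ hζ => ?_⟩
        rcases eq_or_ne ζ w with rfl | hne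
        · rw [key w2 hw2P _ hζ (Ne.symm hww)]
          norm_num
        · rw [key w hw ζ hζ hne]
          norm_num
      · push_neg at hw2
        refine ⟨|∫ z in B, dE E z ^ a * dNI w z ^ (-b) ∂V| + 1, by positivity, fun ζ hζ => ?_⟩
        rcases eq_or_ne ζ w with rfl | hne
        · have := le_abs_self (∫ z in B, dE E z ^ a * dNI ζ z ^ (-b) ∂V)
          linarith
        · rw [key w hw ζ hζ hne]
          positivity
  · -- a ≥ 0 : purely geometric estimate
    set θ : ℝ := a - b + (n : ℝ) with hθdef
    have hθ : 0 < θ := by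
      rw [hθdef]; linarith
    set ρ : ℝ := (2⁻¹ : ℝ) ^ θ with hρdef
    have hρ0 : 0 ≤ ρ := Real.rpow_nonneg (by norm_num) _
    have hρ1 : ρ < 1 := Real.rpow_lt_one (by norm_num) (by norm_num) hθ
    set cV : ℝ := (V B).toReal with hcVdef
    have hcV0 : 0 ≤ cV := ENNReal.toReal_nonneg
    have hcVeq : V B = ENNReal.ofReal cV := by
      rw [hcVdef, ENNReal.ofReal_toReal measure_ball_lt_top.ne]
    set D : ℝ := 2 ^ a * (2 ^ |b| * 2 ^ (-b)) * ((4:ℝ) ^ (n:ℕ) * cV) with hDdef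
    have hD : 0 ≤ D := by positivity
    apply wrap (ENNReal.ofReal D * (1 - ENNReal.ofReal ρ)⁻¹)
    · apply ENNReal.mul_ne_top ENNReal.ofReal_ne_top
      rw [ENNReal.inv_ne_top]
      intro h
      rw [tsub_eq_zero_iff_le] at h
      exact absurd (lt_of_le_of_lt h (ENNReal.ofReal_lt_one.mpr hρ1)) (lt_irrefl _)
    · intro ζ hζ
      have hζn : ‖ζ‖ = 1 := by simpa using hES hζ
      apply main_sum V hES hζ _ hD hρ0
      intro k
      set x : ℝ := (2⁻¹ : ℝ) ^ k with hxdef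
      have hx : 0 < x := by positivity
      set Q : ℝ := (2 * x) ^ a * (2 ^ |b| * (2 * x) ^ (-b)) with hQdef
      have hQ : 0 ≤ Q := by positivity
      have hpt : ∀ z ∈ Ann ζ k, dE E z ^ a * dNI ζ z ^ (-b) ≤ Q := by
        rintro z ⟨h1, h2, h3⟩
        have hlo : x < dNI ζ z := by
          have he : 2 * (2⁻¹ : ℝ) ^ (k + 1) = x := by
            rw [hxdef, pow_succ]; ring
          rwa [he] at h2
        have hdE : dE E z ≤ dNI ζ z := by
          rw [dNI_symm]; exact dE_le hζ z
        have e1 : dE E z ^ a ≤ (2 * x) ^ a :=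
          Real.rpow_le_rpow (dE_nonneg z) (hdE.trans h3) hapos
        have e2 : dNI ζ z ^ (-b) ≤ 2 ^ |b| * (2 * x) ^ (-b) := pow_bound b hx hlo h3
        rw [hQdef]
        exact mul_le_mul e1 e2 (Real.rpow_nonneg (dNI_nonneg ζ z) _)
          (Real.rpow_nonneg (by positivity) _)
      calc ∫⁻ z in Ann ζ k, ENNReal.ofReal (dE E z ^ a * dNI ζ z ^ (-b)) ∂V
          ≤ ∫⁻ _ in Ann ζ k, ENNReal.ofReal Q ∂V :=
            setLIntegral_mono measurable_const
              (fun z hz => ENNReal.ofReal_le_ofReal (hpt z hz))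
        _ = ENNReal.ofReal Q * V (Ann ζ k) := setLIntegral_const _ _
        _ ≤ ENNReal.ofReal Q * (ENNReal.ofReal ((4 * x) ^ (n:ℕ)) * ENNReal.ofReal cV) := by
            apply mul_le_mul_right
            rw [← hcVeq]
            exact cap_volume V hζn k
        _ = ENNReal.ofReal (Q * ((4 * x) ^ (n:ℕ) * cV)) := by
            rw [ENNReal.ofReal_mul hQ, ENNReal.ofReal_mul (by positivity : (0:ℝ) ≤ (4 * x) ^ (n:ℕ))]
        _ ≤ ENNReal.ofReal (D * ρ ^ k) := by
            apply ENNReal.ofReal_le_ofReal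
            apply le_of_eq
            have e1 : ((2:ℝ) * x) ^ a = 2 ^ a * x ^ a := Real.mul_rpow (by norm_num) hx.le
            have e2 : ((2:ℝ) * x) ^ (-b) = 2 ^ (-b) * x ^ (-b) := Real.mul_rpow (by norm_num) hx.le
            have e3 : ((4:ℝ) * x) ^ (n:ℕ) = (4:ℝ) ^ (n:ℕ) * x ^ (n:ℕ) := mul_pow _ _ _
            have e4 : (x:ℝ) ^ (n:ℕ) = x ^ ((n:ℕ):ℝ) := (Real.rpow_natCast x n).symm
            have e5 : x ^ a * x ^ (-b) * x ^ ((n:ℕ):ℝ) = x ^ θ := by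
              rw [← Real.rpow_add hx, ← Real.rpow_add hx]
              have hexp : a + -b + ((n:ℕ):ℝ) = θ := by rw [hθdef]; try ring
              rw [hexp]
            have e6 : x ^ θ = ρ ^ k := by
              rw [hρdef, hxdef]
              exact xpow_eq k θ
            calc Q * ((4 * x) ^ (n:ℕ) * cV)
                = 2 ^ a * (2 ^ |b| * 2 ^ (-b)) * ((4:ℝ) ^ (n:ℕ) * cV) *
                    (x ^ a * x ^ (-b) * x ^ ((n:ℕ):ℝ)) := by
                  rw [hQdef, e1, e2, e3, e4]; ring
              _ = D * ρ ^ k := by rw [e5, e6, hDdef]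
end
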